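/- arXiv:1808.09252 — 6 statements merged into one kernel-verified Lean document; each statement's English description precedes it below -/
import Mathlib

section
/- Let K be a field and σ an automorphism of K with fixed subfield E = {a ∈ K : σ(a) = a}. If a ∈ K is such that the subfield E(σⁿ(a) : n ∈ ℕ) is not finitely generated as a field extension of E, then the set S = { σ^{i₁}(a)·σ^{i₂}(a)⋯σ^{iₙ}(a) : n ≥ 1, 0 ≤ i₁ < i₂ < ⋯ < iₙ } is linearly independent over E. -/
namespace Stmt1Aux

variable {K : Type*} [Field K]

/-- The monomial `∏_{i ∈ S} σ^i(a)`. -/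
def f (σ : K ≃+* K) (a : K) (S : Finset ℕ) : K := ∏ i ∈ S, (σ ^ i) a

lemma pow_apply_pow (σ : K ≃+* K) (a : K) (k i : ℕ) :
    (σ ^ k) ((σ ^ i) a) = (σ ^ (k + i)) a := by rw [pow_add]; rfl

lemma pow_fixed (σ : K ≃+* K) (E : Subfield K) (hE : ∀ x : K, x ∈ E ↔ σ x = x)
    (k : ℕ) (x : K) (hx : x ∈ E) : (σ ^ k) x = x := by
  induction k with
  | zero => rfl
  | succ k ih =>
      have : (σ ^ (k + 1)) x = σ ((σ ^ k) x) := by rw [pow_succ']; rfl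
      rw [this, ih]; exact (hE x).mp hx

lemma map_f (σ : K ≃+* K) (a : K) (k : ℕ) (S : Finset ℕ) :
    (σ ^ k) (f σ a S) = ∏ i ∈ S, (σ ^ (k + i)) a := by
  rw [f, map_prod]
  exact Finset.prod_congr rfl fun i _ => pow_apply_pow σ a k i

theorem main (σ : K ≃+* K) (E : Subfield K)
    (hE : ∀ x : K, x ∈ E ↔ σ x = x) (a : K)
    (hinf : ¬ ∃ s : Finset K,
      Subfield.closure ((E : Set K) ∪ Set.range fun n : ℕ => (σ ^ n) a)
        = Subfield.closure ((E : Set K) ∪ (s : Set K))) :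
    ∀ n (t : Finset (Finset ℕ)) (g : Finset ℕ → E),
      (∀ S ∈ t, ∀ i ∈ S, i < n) →
      (∑ S ∈ t, (g S : K) * f σ a S) = 0 → ∀ S ∈ t, g S = 0 := by
  intro n
  induction n using Nat.strong_induction_on with
  | _ n IH =>
  intro t g hbound hsum
  classical
  by_contra hcon
  push_neg at hcon
  obtain ⟨S₀, hS₀t, hgS₀⟩ := hcon
  set t' : Finset (Finset ℕ) := t.filter (fun S => g S ≠ 0) with ht'
  have hS₀t' : S₀ ∈ t' := Finset.mem_filter.mpr ⟨hS₀t, hgS₀⟩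
  have ht't : t' ⊆ t := Finset.filter_subset _ _
  have hg' : ∀ S ∈ t', g S ≠ 0 := fun S hS => (Finset.mem_filter.mp hS).2
  have hsum' : (∑ S ∈ t', (g S : K) * f σ a S) = 0 := by
    rw [← hsum]
    apply Finset.sum_subset ht't
    intro S hS hSn
    have : g S = 0 := by
      by_contra h
      exact hSn (Finset.mem_filter.mpr ⟨hS, h⟩)
    simp [this]
  -- bound on indices in t'
  rcases Nat.eq_zero_or_pos (t'.sup (fun S => S.sup Nat.succ)) with hb0 | hbpos
  · -- all sets in t' are empty
    have hempty : ∀ S ∈ t', S = ∅ := by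
      intro S hS
      by_contra h
      obtain ⟨i, hi⟩ := Finset.nonempty_iff_ne_empty.mpr h
      have : Nat.succ i ≤ t'.sup (fun S => S.sup Nat.succ) :=
        le_trans (Finset.le_sup (f := Nat.succ) hi)
          (Finset.le_sup (f := fun S => S.sup Nat.succ) hS)
      omega
    have hS₀ : S₀ = ∅ := hempty S₀ hS₀t'
    have ht'eq : t' = {∅} := by
      apply Finset.Subset.antisymm
      · intro S hS; simp [hempty S hS]
      · intro S hS
        simp only [Finset.mem_singleton] at hS
        rw [hS, ← hS₀]; exact hS₀t'
    rw [ht'eq, Finset.sum_singleton] at hsum'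
    simp only [f, Finset.prod_empty, mul_one] at hsum'
    exact hgS₀ (by rw [hS₀]; exact_mod_cast hsum')
  · obtain ⟨m, hm⟩ : ∃ m, t'.sup (fun S => S.sup Nat.succ) = m + 1 :=
      ⟨t'.sup (fun S => S.sup Nat.succ) - 1, by omega⟩
    -- every index in t' is ≤ m
    have hle : ∀ S ∈ t', ∀ i ∈ S, i ≤ m := by
      intro S hS i hi
      have : Nat.succ i ≤ t'.sup (fun S => S.sup Nat.succ) :=
        le_trans (Finset.le_sup (f := Nat.succ) hi)
          (Finset.le_sup (f := fun S => S.sup Nat.succ) hS)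
      omega
    -- m is attained
    have ht'ne : t'.Nonempty := ⟨S₀, hS₀t'⟩
    obtain ⟨S₁, hS₁t', hS₁⟩ := Finset.exists_mem_eq_sup t' ht'ne (fun S => S.sup Nat.succ)
    have hS₁ne : S₁.Nonempty := by
      rcases Finset.eq_empty_or_nonempty S₁ with h | h
      · exfalso; rw [h] at hS₁; rw [hS₁] at hm; simp at hm
      · exact h
    obtain ⟨i₁, hi₁S₁, hi₁⟩ := Finset.exists_mem_eq_sup S₁ hS₁ne Nat.succ
    have hmS₁ : m ∈ S₁ := by
      have : i₁ = m := by rw [hS₁, hi₁] at hm; omega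
      rwa [← this]
    have hmn : m < n := hbound S₁ (ht't hS₁t') m hmS₁
    -- split
    set ta := t'.filter (fun S => m ∈ S) with hta
    set tb := t'.filter (fun S => m ∉ S) with htb
    set D : K := ∑ S ∈ ta, (g S : K) * f σ a (S.erase m) with hD
    set B : K := ∑ S ∈ tb, (g S : K) * f σ a S with hB
    have hsplit : D * (σ ^ m) a + B = 0 := by
      rw [← hsum', ← Finset.sum_filter_add_sum_filter_not t' (fun S => m ∈ S)]
      congr 1
      rw [hD, Finset.sum_mul]
      apply Finset.sum_congr rfl
      intro S hS
      have hmS : m ∈ S := (Finset.mem_filter.mp hS).2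
      rw [mul_assoc]
      congr 1
      rw [f, f]
      exact Finset.prod_erase_mul S _ hmS
    by_cases hDz : D = 0
    · -- use IH at level m
      set t'' := ta.image (fun S => S.erase m) with ht''
      set g'' : Finset ℕ → E := fun S' => g (insert m S') with hg''
      have hinj : ∀ S ∈ ta, ∀ S' ∈ ta, S.erase m = S'.erase m → S = S' := by
        intro S hS S' hS' h
        have h1 : m ∈ S := (Finset.mem_filter.mp hS).2
        have h2 : m ∈ S' := (Finset.mem_filter.mp hS').2
        rw [← Finset.insert_erase h1, ← Finset.insert_erase h2, h]
      have hsum'' : (∑ S' ∈ t'', (g'' S' : K) * f σ a S') = 0 := by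
        rw [ht'', Finset.sum_image hinj, ← hDz, hD]
        apply Finset.sum_congr rfl
        intro S hS
        have h1 : m ∈ S := (Finset.mem_filter.mp hS).2
        rw [hg'']
        simp only [Finset.insert_erase h1]
      have hbound'' : ∀ S' ∈ t'', ∀ i ∈ S', i < m := by
        intro S' hS' i hi
        obtain ⟨S, hS, rfl⟩ := Finset.mem_image.mp hS'
        have := hle S (Finset.mem_filter.mp hS).1 i (Finset.mem_of_mem_erase hi)
        have := Finset.ne_of_mem_erase hi
        omega
      have hall := IH m hmn t'' g'' hbound'' hsum''
      have hS₁ta : S₁ ∈ ta := Finset.mem_filter.mpr ⟨hS₁t', hmS₁⟩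
      have := hall (S₁.erase m) (Finset.mem_image_of_mem _ hS₁ta)
      rw [hg''] at this
      simp only [Finset.insert_erase hmS₁] at this
      exact hg' S₁ hS₁t' this
    · -- D ≠ 0 : the extension is finitely generated, contradiction
      set F : Subfield K :=
        Subfield.closure ((E : Set K) ∪ (fun j => (σ ^ j) a) '' (Set.Iio m)) with hF
      have hEF : ∀ x : K, x ∈ E → x ∈ F :=
        fun x hx => Subfield.subset_closure (Or.inl hx)
      have h1 : D * (σ ^ m) a = -B := by linear_combination hsplit
      have hDB : (σ ^ m) a = -B / D := by
        rw [eq_div_iff hDz, mul_comm]; exact h1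
      have claim : ∀ j, (σ ^ j) a ∈ F := by
        intro j
        induction j using Nat.strong_induction_on with
        | _ j IHj =>
        by_cases hj : j < m
        · exact Subfield.subset_closure (Or.inr ⟨j, hj, rfl⟩)
        · push_neg at hj
          set k := j - m with hk
          have hjk : j = k + m := by omega
          have hBk : (σ ^ k) B ∈ F := by
            rw [hB, map_sum]
            apply Subfield.sum_mem
            intro S hS
            rw [map_mul, pow_fixed σ E hE k _ (g S).2, map_f]
            apply Subfield.mul_mem _ (hEF _ (g S).2)
            apply Subfield.prod_mem
            intro i hi
            have h1 : i ≤ m := hle S (Finset.mem_filter.mp hS).1 i hi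
            have h2 : i ≠ m := by
              intro h; exact (Finset.mem_filter.mp hS).2 (h ▸ hi)
            exact IHj (k + i) (by omega)
          have hDk : (σ ^ k) D ∈ F := by
            rw [hD, map_sum]
            apply Subfield.sum_mem
            intro S hS
            rw [map_mul, pow_fixed σ E hE k _ (g S).2, map_f]
            apply Subfield.mul_mem _ (hEF _ (g S).2)
            apply Subfield.prod_mem
            intro i hi
            have h1 : i ≤ m := hle S (Finset.mem_filter.mp hS).1 i (Finset.mem_of_mem_erase hi)
            have h2 : i ≠ m := Finset.ne_of_mem_erase hi
            exact IHj (k + i) (by omega)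
          have hDkz : (σ ^ k) D ≠ 0 := by
            intro h
            exact hDz ((σ ^ k).injective (by rw [h, map_zero]))
          have : (σ ^ j) a = -((σ ^ k) B) / ((σ ^ k) D) := by
            rw [hjk, ← pow_apply_pow σ a k m, hDB, map_div₀, map_neg]
          rw [this]
          exact Subfield.div_mem _ (Subfield.neg_mem _ hBk) hDk
      apply hinf
      refine ⟨(Finset.range m).image (fun j => (σ ^ j) a), ?_⟩
      have hsF : ((((Finset.range m).image (fun j => (σ ^ j) a)) : Finset K) : Set K)
          = (fun j => (σ ^ j) a) '' (Set.Iio m) := by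
        rw [Finset.coe_image, Finset.coe_range]
      apply le_antisymm
      · rw [Subfield.closure_le]
        rintro x (hx | ⟨j, rfl⟩)
        · rw [hsF]; exact hEF x hx
        · rw [hsF]; exact claim j
      · rw [Subfield.closure_le]
        rintro x (hx | hx)
        · exact Subfield.subset_closure (Or.inl hx)
        · rw [hsF] at hx
          obtain ⟨j, _, rfl⟩ := hx
          exact Subfield.subset_closure (Or.inr ⟨j, rfl⟩)

theorem indep (σ : K ≃+* K) (E : Subfield K)
    (hE : ∀ x : K, x ∈ E ↔ σ x = x) (a : K)
    (hinf : ¬ ∃ s : Finset K,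
      Subfield.closure ((E : Set K) ∪ Set.range fun n : ℕ => (σ ^ n) a)
        = Subfield.closure ((E : Set K) ∪ (s : Set K))) :
    LinearIndependent E (f σ a) := by
  rw [linearIndependent_iff']
  intro s g hsum i hi
  apply main σ E hE a hinf (s.sup (fun S => S.sup Nat.succ)) s g _ _ i hi
  · intro S hS j hj
    have : Nat.succ j ≤ s.sup (fun S => S.sup Nat.succ) :=
      le_trans (Finset.le_sup (f := Nat.succ) hj)
        (Finset.le_sup (f := fun S => S.sup Nat.succ) hS)
    omega
  · rw [← hsum]
    apply Finset.sum_congr rfl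
    intro S _
    rfl

end Stmt1Aux

theorem stmt1 {K : Type*} [Field K] (σ : K ≃+* K) (E : Subfield K)
    (hE : ∀ x : K, x ∈ E ↔ σ x = x) (a : K)
    (hinf : ¬ ∃ s : Finset K,
      Subfield.closure ((E : Set K) ∪ Set.range fun n : ℕ => (σ ^ n) a)
        = Subfield.closure ((E : Set K) ∪ (s : Set K))) :
    LinearIndependent E
      (fun z : {x : K | ∃ (n : ℕ) (i : Fin (n + 1) → ℕ), StrictMono i ∧
          x = ∏ j, (σ ^ (i j)) a} => (z : K)) := by
  have hB := Stmt1Aux.indep σ E hE a hinf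
  have hrange := hB.linearIndepOn_id
  have hsubset : {x : K | ∃ (n : ℕ) (i : Fin (n + 1) → ℕ), StrictMono i ∧
      x = ∏ j, (σ ^ (i j)) a} ⊆ Set.range (Stmt1Aux.f σ a) := by
    rintro x ⟨n, i, hmono, rfl⟩
    refine ⟨Finset.image i Finset.univ, ?_⟩
    rw [Stmt1Aux.f, Finset.prod_image (fun j _ j' _ h => hmono.injective h)]
  exact hrange.mono hsubset
end

section
/- Let K be a field, σ an automorphism of K with fixed field E, and suppose a ∈ K is such that E(σⁿ(a) : n ∈ ℕ) is infinitely generated over E. Fix n ≥ 1 and set yᵢ = σ^i(a)·x^{2n} in K[x,σ] for 0 ≤ i ≤ n. Then the elements y₀, y₁, …, yₙ generate a free E-subalgebra of K[x,σ]; i.e., there is no nonzero noncommutative polynomial F ∈ E⟨z₀,…,zₙ⟩ with F(y₀,…,yₙ) = 0. -/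
namespace Stmt8Aux

variable {K : Type*} [Field K]

lemma mulapp (g h : K ≃+* K) (z : K) : (g * h) z = g (h z) := rfl

lemma oneapp (z : K) : (1 : K ≃+* K) z = z := rfl

/-- `Bw σ a n r l = ∏_j σ^(r + lⱼ + 2nj) a`. -/
def Bw (σ : K ≃+* K) (a : K) (n : ℕ) : ℕ → List (Fin (n + 1)) → K
  | _, [] => 1
  | r, i :: t => (σ ^ (r + (i : ℕ))) a * Bw σ a n (r + 2 * n) t

def Fld (σ : K ≃+* K) (E : Subfield K) (a : K) (M : ℕ) : Subfield K :=
  Subfield.closure ((E : Set K) ∪ (fun j => (σ ^ j) a) '' Set.Iio M)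

variable (σ : K ≃+* K) (E : Subfield K) (a : K) {n : ℕ}

lemma Fmono {M M' : ℕ} (h : M ≤ M') : Fld σ E a M ≤ Fld σ E a M' :=
  Subfield.closure_mono
    (Set.union_subset_union_right _ (Set.image_mono (Set.Iio_subset_Iio h)))

lemma Emem {z : K} (hz : z ∈ E) {M : ℕ} : z ∈ Fld σ E a M :=
  Subfield.subset_closure (Or.inl hz)

lemma genmem {j M : ℕ} (hj : j < M) : (σ ^ j) a ∈ Fld σ E a M :=
  Subfield.subset_closure (Or.inr ⟨j, hj, rfl⟩)

lemma Epow (hE : ∀ z : K, z ∈ E ↔ σ z = z) {z : K} (hz : z ∈ E) (r : ℕ) :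
    (σ ^ r) z = z := by
  induction r with
  | zero => simp [oneapp]
  | succ r ih => rw [pow_succ, mulapp, (hE z).1 hz, ih]

lemma Fmap (hE : ∀ z : K, z ∈ E ↔ σ z = z) {b : K} {M : ℕ}
    (hb : b ∈ Fld σ E a M) : σ b ∈ Fld σ E a (M + 1) := by
  have h : Fld σ E a M ≤ (Fld σ E a (M + 1)).comap (σ : K →+* K) := by
    apply Subfield.closure_le.2
    rintro z (hz | ⟨j, hj, rfl⟩)
    · simp only [SetLike.mem_coe, Subfield.mem_comap, RingEquiv.coe_toRingHom]
      rw [(hE z).1 hz]; exact Emem σ E a hz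
    · simp only [SetLike.mem_coe, Subfield.mem_comap, RingEquiv.coe_toRingHom]
      have h1 : σ ((σ ^ j) a) = (σ ^ (j + 1)) a := by rw [pow_succ', mulapp]
      rw [h1]
      exact genmem σ E a (by simpa using hj)
  exact h hb

lemma Fmappow (hE : ∀ z : K, z ∈ E ↔ σ z = z) {b : K} {M : ℕ} (r : ℕ)
    (hb : b ∈ Fld σ E a M) : (σ ^ r) b ∈ Fld σ E a (M + r) := by
  induction r with
  | zero => simpa [oneapp]
  | succ r ih =>
    have h1 : σ ((σ ^ r) b) = (σ ^ (r + 1)) b := by rw [pow_succ', mulapp]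
    rw [← Nat.add_assoc, ← h1]
    exact Fmap σ E a hE ih

lemma Bshift (l : List (Fin (n + 1))) : ∀ r, σ (Bw σ a n r l) = Bw σ a n (r + 1) l := by
  induction l with
  | nil => intro r; simp [Bw]
  | cons i t ih =>
    intro r
    have h1 : σ ((σ ^ (r + (i : ℕ))) a) = (σ ^ (r + 1 + (i : ℕ))) a := by
      have e : r + 1 + (i : ℕ) = (r + (i : ℕ)) + 1 := by omega
      rw [e, pow_succ', mulapp]
    have h2 : r + 2 * n + 1 = r + 1 + 2 * n := by omega
    simp only [Bw, map_mul, ih, h1, h2]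

lemma Bpow (l : List (Fin (n + 1))) (s : ℕ) : ∀ r, (σ ^ r) (Bw σ a n s l) = Bw σ a n (s + r) l := by
  intro r
  induction r with
  | zero => simp [oneapp]
  | succ r ih =>
    rw [pow_succ', mulapp, ih, Bshift, Nat.add_assoc]

lemma Bapp (l₁ l₂ : List (Fin (n + 1))) : ∀ r,
    Bw σ a n r (l₁ ++ l₂) = Bw σ a n r l₁ * Bw σ a n (r + 2 * n * l₁.length) l₂ := by
  induction l₁ with
  | nil => intro r; simp [Bw]
  | cons i t ih =>
    intro r
    have e : r + 2 * n + 2 * n * t.length = r + 2 * n * (i :: t).length := by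
      rw [List.length_cons]; ring
    calc Bw σ a n r ((i :: t) ++ l₂)
        = (σ ^ (r + (i : ℕ))) a * Bw σ a n (r + 2 * n) (t ++ l₂) := rfl
      _ = (σ ^ (r + (i : ℕ))) a *
            (Bw σ a n (r + 2 * n) t * Bw σ a n (r + 2 * n + 2 * n * t.length) l₂) := by rw [ih]
      _ = ((σ ^ (r + (i : ℕ))) a * Bw σ a n (r + 2 * n) t) *
            Bw σ a n (r + 2 * n * (i :: t).length) l₂ := by rw [e]; ring
      _ = Bw σ a n r (i :: t) * Bw σ a n (r + 2 * n * (i :: t).length) l₂ := rfl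

lemma Bmem (hn : 1 ≤ n) : ∀ (l : List (Fin (n + 1))) (r M : ℕ),
    r + 2 * n * l.length ≤ M → Bw σ a n r l ∈ Fld σ E a M := by
  intro l
  induction l with
  | nil => intro r M _; exact one_mem _
  | cons i t ih =>
    intro r M h
    rw [List.length_cons] at h
    have hmul : 2 * n * (t.length + 1) = 2 * (n * t.length) + 2 * n := by ring
    rw [hmul] at h
    have hi : (i : ℕ) < n + 1 := i.isLt
    simp only [Bw]
    refine mul_mem (genmem σ E a (by omega)) (ih (r + 2 * n) M ?_)
    have : 2 * n * t.length = 2 * (n * t.length) := by ring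
    omega

lemma fin_gen (M₀ : ℕ) (h : ∀ m, M₀ ≤ m → (σ ^ m) a ∈ Fld σ E a m) :
    ∃ s : Finset K,
      Subfield.closure ((E : Set K) ∪ Set.range fun n : ℕ => (σ ^ n) a)
        = Subfield.closure ((E : Set K) ∪ (s : Set K)) := by
  classical
  refine ⟨(Finset.range M₀).image fun j => (σ ^ j) a, ?_⟩
  have hs : (((Finset.range M₀).image fun j => (σ ^ j) a : Finset K) : Set K)
      = (fun j => (σ ^ j) a) '' Set.Iio M₀ := by
    rw [Finset.coe_image, Finset.coe_range]
  have hFld : Subfield.closure ((E : Set K) ∪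
      (((Finset.range M₀).image fun j => (σ ^ j) a : Finset K) : Set K)) = Fld σ E a M₀ := by
    rw [Fld, hs]
  have hall : ∀ m, (σ ^ m) a ∈ Fld σ E a M₀ := by
    intro m
    induction m using Nat.strong_induction_on with
    | _ m ih =>
      rcases lt_or_ge m M₀ with hm | hm
      · exact genmem σ E a hm
      · have h1 : Fld σ E a m ≤ Fld σ E a M₀ := by
          apply Subfield.closure_le.2
          rintro z (hz | ⟨j, hj, rfl⟩)
          · exact Emem σ E a hz
          · exact ih j hj
        exact h1 (h m hm)
  rw [hFld]
  apply le_antisymm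
  · apply Subfield.closure_le.2
    rintro z (hz | ⟨m, rfl⟩)
    · exact Emem σ E a hz
    · exact hall m
  · apply Subfield.closure_le.2
    rintro z (hz | ⟨j, _, rfl⟩)
    · exact Subfield.subset_closure (Or.inl hz)
    · exact Subfield.subset_closure (Or.inr ⟨j, rfl⟩)

lemma indep (hE : ∀ z : K, z ∈ E ↔ σ z = z)
    (hinf : ¬ ∃ s : Finset K,
      Subfield.closure ((E : Set K) ∪ Set.range fun n : ℕ => (σ ^ n) a)
        = Subfield.closure ((E : Set K) ∪ (s : Set K)))
    (hn : 1 ≤ n) :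
    ∀ (k : ℕ) (t : Finset (List (Fin (n + 1)))) (c : List (Fin (n + 1)) → K),
      (∀ l ∈ t, l.length = k) → (∀ l, c l ∈ E) →
      (∑ l ∈ t, c l * Bw σ a n 0 l) = 0 → ∀ l ∈ t, c l = 0 := by
  classical
  intro k
  induction k with
  | zero =>
    intro t c hlen hcE hsum l hl
    have hnil : l = [] := List.length_eq_zero_iff.mp (hlen l hl)
    subst hnil
    have ht : t = {[]} := by
      apply Finset.eq_singleton_iff_unique_mem.2
      exact ⟨hl, fun m hm => List.length_eq_zero_iff.mp (hlen m hm)⟩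
    rw [ht, Finset.sum_singleton] at hsum
    simpa [Bw] using hsum
  | succ k ih =>
    intro t c hlen hcE hsum
    by_contra hcon
    push_neg at hcon
    obtain ⟨l₀, hl₀t, hl₀⟩ := hcon
    -- decomposition facts
    have hdec : ∀ l ∈ t, l.dropLast ++ [l.getLastD 0] = l ∧ l.dropLast.length = k := by
      intro l hl
      have hne : l ≠ [] := by
        intro h; rw [h] at hl; simpa using hlen [] hl
      constructor
      · rw [List.getLastD_eq_getLast?, List.getLast?_eq_getLast hne]
        simp [List.dropLast_append_getLast hne]
      · have := hlen l hl
        have := (List.length_dropLast : l.dropLast.length = l.length - 1)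
        omega
    set q := 2 * n * k with hq
    set ti : Fin (n + 1) → Finset (List (Fin (n + 1))) :=
      fun i => t.filter fun l => l.getLastD 0 = i with hti
    set ci : Fin (n + 1) → List (Fin (n + 1)) → K :=
      fun i l' => if l' ++ [i] ∈ t then c (l' ++ [i]) else 0 with hci
    set ui : Fin (n + 1) → Finset (List (Fin (n + 1))) :=
      fun i => (ti i).image List.dropLast with hui
    set d : Fin (n + 1) → K := fun i => ∑ l' ∈ ui i, ci i l' * Bw σ a n 0 l' with hd
    -- members of ti i decompose with last letter i
    have hmem_ti : ∀ (i : Fin (n + 1)), ∀ l ∈ ti i,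
        l.dropLast ++ [i] = l ∧ l.dropLast.length = k := by
      intro i l hl
      rw [hti, Finset.mem_filter] at hl
      obtain ⟨hlt, hlast⟩ := hl
      obtain ⟨h1, h2⟩ := hdec l hlt
      rw [hlast] at h1
      exact ⟨h1, h2⟩
    have hinj : ∀ (i : Fin (n + 1)), ∀ l₁ ∈ ti i, ∀ l₂ ∈ ti i,
        l₁.dropLast = l₂.dropLast → l₁ = l₂ := by
      intro i l₁ h1 l₂ h2 he
      rw [← (hmem_ti i l₁ h1).1, ← (hmem_ti i l₂ h2).1, he]
    -- ui lengths
    have hulen : ∀ (i : Fin (n + 1)), ∀ l' ∈ ui i, l'.length = k := by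
      intro i l' hl'
      rw [hui, Finset.mem_image] at hl'
      obtain ⟨l, hl, rfl⟩ := hl'
      exact (hmem_ti i l hl).2
    have hciE : ∀ (i : Fin (n + 1)) (l' : List (Fin (n + 1))), ci i l' ∈ E := by
      intro i l'
      rw [hci]
      dsimp only
      split
      · exact hcE _
      · exact zero_mem E
    -- fiber rewrite
    have hfib : ∀ i : Fin (n + 1),
        ∑ l ∈ ti i, c l * Bw σ a n 0 l = d i * (σ ^ (q + (i : ℕ))) a := by
      intro i
      rw [hd]
      dsimp only
      rw [Finset.sum_mul, hui]
      rw [Finset.sum_image (hinj i)]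
      apply Finset.sum_congr rfl
      intro l hl
      obtain ⟨h1, h2⟩ := hmem_ti i l hl
      have hlt : l ∈ t := (Finset.mem_filter.1 (by rwa [hti] at hl)).1
      have hciv : ci i l.dropLast = c l := by
        rw [hci]; dsimp only
        rw [h1, if_pos hlt]
      have hBl : Bw σ a n 0 l = Bw σ a n 0 l.dropLast * (σ ^ (q + (i : ℕ))) a := by
        conv_lhs => rw [← h1]
        rw [Bapp, h2]
        simp [Bw, hq]
      rw [hciv, hBl]; ring
    -- the relation in K
    have hrel0 : ∑ i : Fin (n + 1), d i * (σ ^ (q + (i : ℕ))) a = 0 := by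
      rw [← hsum]
      rw [← Finset.sum_fiberwise_of_maps_to (g := fun l => l.getLastD 0)
        (fun l _ => Finset.mem_univ _) (fun l => c l * Bw σ a n 0 l)]
      apply Finset.sum_congr rfl
      intro i _
      exact (hfib i).symm
    -- d i lies in Fld q
    have hdF : ∀ i : Fin (n + 1), d i ∈ Fld σ E a q := by
      intro i
      rw [hd]
      dsimp only
      apply Subfield.sum_mem
      intro l' hl'
      refine Subfield.mul_mem _ (Emem σ E a (hciE i l')) (Bmem σ E a hn l' 0 q ?_)
      rw [hulen i l' hl', hq, Nat.zero_add]
    -- some d i is nonzero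
    have hd0 : d (l₀.getLastD 0) ≠ 0 := by
      intro h0
      have hl₀ti : l₀ ∈ ti (l₀.getLastD 0) := by
        rw [hti, Finset.mem_filter]; exact ⟨hl₀t, rfl⟩
      have hmem : l₀.dropLast ∈ ui (l₀.getLastD 0) := by
        rw [hui, Finset.mem_image]; exact ⟨l₀, hl₀ti, rfl⟩
      have := ih (ui (l₀.getLastD 0)) (ci (l₀.getLastD 0))
        (hulen _) (hciE _) (by rw [hd] at h0; exact h0) l₀.dropLast hmem
      rw [hci] at this
      dsimp only at this
      rw [(hdec l₀ hl₀t).1, if_pos hl₀t] at this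
      exact hl₀ ((hdec l₀ hl₀t).1 ▸ this)
    -- maximal nonzero index
    set D : Finset (Fin (n + 1)) := Finset.univ.filter fun i => d i ≠ 0 with hD
    have hDne : D.Nonempty := by
      refine ⟨l₀.getLastD 0, ?_⟩
      rw [hD, Finset.mem_filter]
      exact ⟨Finset.mem_univ _, hd0⟩
    set imax := D.max' hDne with himax
    have hdmax : d imax ≠ 0 := (Finset.mem_filter.1 (D.max'_mem hDne)).2
    have hle : ∀ i : Fin (n + 1), d i ≠ 0 → i ≤ imax := by
      intro i hi
      refine D.le_max' i ?_
      rw [hD, Finset.mem_filter]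
      exact ⟨Finset.mem_univ _, hi⟩
    -- key: σ^m a ∈ Fld m for all large m
    have key : ∀ m, q + (imax : ℕ) ≤ m → (σ ^ m) a ∈ Fld σ E a m := by
      intro m hm
      clear_value q
      set r := m - (q + (imax : ℕ)) with hr
      have hmr : m = q + r + (imax : ℕ) := by omega
      have hrel : ∑ i : Fin (n + 1), (σ ^ r) (d i) * (σ ^ (q + r + (i : ℕ))) a = 0 := by
        have := congrArg (σ ^ r) hrel0
        rw [map_sum, map_zero] at this
        rw [← this]
        apply Finset.sum_congr rfl
        intro i _
        have e0 : q + r + (i : ℕ) = r + (q + (i : ℕ)) := by omega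
        rw [map_mul, e0, pow_add, mulapp]
      rw [← Finset.add_sum_erase _ _ (Finset.mem_univ imax)] at hrel
      have hisol : (σ ^ r) (d imax) * (σ ^ (q + r + (imax : ℕ))) a
          = - ∑ i ∈ Finset.univ.erase imax, (σ ^ r) (d i) * (σ ^ (q + r + (i : ℕ))) a :=
        eq_neg_of_add_eq_zero_left hrel
      have hprodmem : (σ ^ r) (d imax) * (σ ^ m) a ∈ Fld σ E a m := by
        rw [hmr, hisol]
        apply Subfield.neg_mem
        apply Subfield.sum_mem
        intro i hi
        rcases eq_or_ne (d i) 0 with h | h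
        · rw [h, map_zero, zero_mul]; exact zero_mem _
        · have hine : i ≠ imax := (Finset.mem_erase.1 hi).1
          have hilt : (i : ℕ) < (imax : ℕ) := by
            have h1 : i ≤ imax := hle i h
            exact lt_of_le_of_ne h1 (fun hc => hine (Fin.val_injective hc))
          refine Subfield.mul_mem _ ?_ (genmem σ E a (by omega))
          have := Fmappow σ E a hE r (hdF i)
          exact Fmono σ E a (by omega) this
      have hne : (σ ^ r) (d imax) ≠ 0 := by
        intro h
        exact hdmax ((σ ^ r).injective (by rw [h, map_zero]))
      have hmemd : (σ ^ r) (d imax) ∈ Fld σ E a m := by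
        have := Fmappow σ E a hE r (hdF imax)
        exact Fmono σ E a (by omega) this
      have : (σ ^ m) a = ((σ ^ r) (d imax))⁻¹ * ((σ ^ r) (d imax) * (σ ^ m) a) := by
        field_simp
      rw [this]
      exact Subfield.mul_mem _ (Subfield.inv_mem _ hmemd) hprodmem
    exact hinf (fin_gen σ E a (q + (imax : ℕ)) key)

end Stmt8Aux

open Stmt8Aux

/-- Abstract setting for the skew polynomial ring `K[x,σ]`: a ring `R` containing `K`
via `f`, with `x` satisfying the skew relation, such that the powers of `x` are left
linearly independent over `K`.  If `E(σⁿ(a) : n)` is infinitely generated over the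
fixed field `E`, then the elements `yᵢ = σ^i(a) x^{2n}`, `0 ≤ i ≤ n`, generate a free
`E`-algebra: the monomials in the `yᵢ` are left `E`-linearly independent. -/
theorem stmt8 {K R : Type*} [Field K] [Ring R] (σ : K ≃+* K)
    (f : K →+* R) (hf : Function.Injective f) (x : R)
    (hskew : ∀ b : K, x * f b = f (σ b) * x)
    (hbasis : ∀ (m : ℕ) (g : ℕ → K),
      (∑ i ∈ Finset.range m, f (g i) * x ^ i) = 0 → ∀ i < m, g i = 0)
    (E : Subfield K) (hE : ∀ z : K, z ∈ E ↔ σ z = z) (a : K)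
    (hinf : ¬ ∃ s : Finset K,
      Subfield.closure ((E : Set K) ∪ Set.range fun n : ℕ => (σ ^ n) a)
        = Subfield.closure ((E : Set K) ∪ (s : Set K)))
    (n : ℕ) (hn : 1 ≤ n)
    (y : Fin (n + 1) → R) (hy : ∀ i, y i = f ((σ ^ (i : ℕ)) a) * x ^ (2 * n)) :
    ∀ (s : Finset (List (Fin (n + 1)))) (c : List (Fin (n + 1)) → K),
      (∀ l, c l ∈ E) →
      (∑ l ∈ s, f (c l) * (l.map y).prod) = 0 →
      ∀ l ∈ s, c l = 0 := by
  classical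
  intro s c hcE hsum
  have hx : ∀ (k : ℕ) (b : K), x ^ k * f b = f ((σ ^ k) b) * x ^ k := by
    intro k
    induction k with
    | zero => intro b; simp [oneapp]
    | succ k ih =>
      intro b
      calc x ^ (k + 1) * f b = x ^ k * (x * f b) := by rw [pow_succ, mul_assoc]
        _ = x ^ k * (f (σ b) * x) := by rw [hskew]
        _ = (x ^ k * f (σ b)) * x := by rw [mul_assoc]
        _ = (f ((σ ^ k) (σ b)) * x ^ k) * x := by rw [ih]
        _ = f ((σ ^ (k + 1)) b) * x ^ (k + 1) := by
            rw [mul_assoc, ← pow_succ x, pow_succ σ, mulapp]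
  have hprod : ∀ l : List (Fin (n + 1)),
      (List.map y l).prod = f (Bw σ a n 0 l) * x ^ (2 * n * l.length) := by
    intro l
    induction l with
    | nil => simp [Bw]
    | cons i tl ih =>
      rw [List.map_cons, List.prod_cons, ih, hy i]
      have h1 : x ^ (2 * n) * f (Bw σ a n 0 tl) = f (Bw σ a n (2 * n) tl) * x ^ (2 * n) := by
        rw [hx (2 * n) (Bw σ a n 0 tl), Bpow, Nat.zero_add]
      have hrhs : f (Bw σ a n 0 (i :: tl)) * x ^ (2 * n * (i :: tl).length)
          = f ((σ ^ (i : ℕ)) a) *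
              ((x ^ (2 * n) * f (Bw σ a n 0 tl)) * x ^ (2 * n * tl.length)) := by
        have e1 : Bw σ a n 0 (i :: tl) = (σ ^ (i : ℕ)) a * Bw σ a n (2 * n) tl := by
          simp [Bw]
        have e2 : 2 * n * (i :: tl).length = 2 * n + 2 * n * tl.length := by
          rw [List.length_cons]; ring
        rw [e1, e2, map_mul, pow_add, h1]
        simp only [mul_assoc]
      rw [hrhs]
      simp only [mul_assoc]
  set N := (s.sup fun l => 2 * n * l.length) + 1 with hN
  set g : ℕ → K := fun j => ∑ l ∈ s.filter (fun l => 2 * n * l.length = j),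
    c l * Bw σ a n 0 l with hg
  have hmain : ∑ j ∈ Finset.range N, f (g j) * x ^ j = 0 := by
    calc ∑ j ∈ Finset.range N, f (g j) * x ^ j
        = ∑ j ∈ Finset.range N, ∑ l ∈ s.filter (fun l => 2 * n * l.length = j),
            f (c l) * (List.map y l).prod := by
          apply Finset.sum_congr rfl
          intro j _
          rw [hg]
          dsimp only
          rw [map_sum, Finset.sum_mul]
          apply Finset.sum_congr rfl
          intro l hl
          have hj : 2 * n * l.length = j := (Finset.mem_filter.1 hl).2
          rw [map_mul, hprod l, ← hj, mul_assoc]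
      _ = ∑ l ∈ s, f (c l) * (List.map y l).prod := by
          apply Finset.sum_fiberwise_of_maps_to
          intro l hl
          rw [Finset.mem_range, hN]
          exact Nat.lt_succ_of_le (Finset.le_sup (f := fun l => 2 * n * l.length) hl)
      _ = 0 := hsum
  have hzero := hbasis N g hmain
  intro l₀ hl₀
  have hNl : 2 * n * l₀.length < N := by
    rw [hN]
    exact Nat.lt_succ_of_le (Finset.le_sup (f := fun l => 2 * n * l.length) hl₀)
  have h2 := hzero _ hNl
  rw [hg] at h2
  dsimp only at h2
  have hfeq : s.filter (fun l => 2 * n * l.length = 2 * n * l₀.length)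
      = s.filter (fun l => l.length = l₀.length) := by
    apply Finset.filter_congr
    intro l _
    constructor
    · intro h
      exact Nat.eq_of_mul_eq_mul_left (by omega) h
    · intro h
      rw [h]
  rw [hfeq] at h2
  exact indep σ E a hE hinf hn l₀.length (s.filter (fun l => l.length = l₀.length)) c
    (fun l hl => (Finset.mem_filter.1 hl).2) hcE h2 l₀ (Finset.mem_filter.2 ⟨hl₀, rfl⟩)
end

section
/- Let K be a field of characteristic p > 0, σ an automorphism of K, and y an element of the skew power series ring K[[x,σ]] of positive order (all terms of degree ≥ 1 in x). For any nonzero integer j write j = p^λ j₁ with gcd(p, j₁) = 1. Then (1 + y)^j = 1 + j₁ y^{p^λ} + (terms of order strictly greater than p^λ · ord(y)), where ord denotes the least degree of a nonzero term. -/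
namespace Stmt10Aux

variable {R : Type*} [Ring R]

/-- `r` has order `≥ m`, i.e. `r ∈ x^m R`. -/
def Pm (x : R) (m : ℕ) (r : R) : Prop := ∃ s, r = x ^ m * s

lemma movepow (x : R) (hxnorm : ∀ r : R, ∃ r' : R, r * x = x * r') (r : R) (k : ℕ) :
    ∃ r', r * x ^ k = x ^ k * r' := by
  induction k with
  | zero => exact ⟨r, by simp⟩
  | succ n ih =>
    obtain ⟨r', hr'⟩ := ih
    obtain ⟨r'', hr''⟩ := hxnorm r'
    refine ⟨r'', ?_⟩
    rw [pow_succ, ← mul_assoc, hr', mul_assoc, hr'', ← mul_assoc]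

lemma Pm.mono {x : R} {m n : ℕ} (h : n ≤ m) {r : R} : Pm x m r → Pm x n r := by
  rintro ⟨s, rfl⟩
  exact ⟨x ^ (m - n) * s, by rw [← mul_assoc, ← pow_add, Nat.add_sub_cancel' h]⟩

lemma Pm.add {x : R} {m : ℕ} {r t : R} : Pm x m r → Pm x m t → Pm x m (r + t) := by
  rintro ⟨s, rfl⟩ ⟨s', rfl⟩
  exact ⟨s + s', (mul_add _ _ _).symm⟩

lemma Pm.neg {x : R} {m : ℕ} {r : R} : Pm x m r → Pm x m (-r) := by
  rintro ⟨s, rfl⟩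
  exact ⟨-s, (mul_neg _ _).symm⟩

lemma Pm.mulR {x : R} {m : ℕ} {r : R} (t : R) : Pm x m r → Pm x m (r * t) := by
  rintro ⟨s, rfl⟩
  exact ⟨s * t, mul_assoc _ _ _⟩

lemma Pm.mulL (x : R) (hxnorm : ∀ r : R, ∃ r' : R, r * x = x * r')
    {m : ℕ} {r : R} (t : R) : Pm x m r → Pm x m (t * r) := by
  rintro ⟨s, rfl⟩
  obtain ⟨t', ht'⟩ := movepow x hxnorm t m
  exact ⟨t' * s, by rw [← mul_assoc, ht', mul_assoc]⟩

lemma Pm.mul (x : R) (hxnorm : ∀ r : R, ∃ r' : R, r * x = x * r')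
    {m n : ℕ} {r t : R} : Pm x m r → Pm x n t → Pm x (m + n) (r * t) := by
  rintro ⟨s, rfl⟩ ⟨s', rfl⟩
  obtain ⟨s'', hs''⟩ := movepow x hxnorm s n
  refine ⟨s'' * s', ?_⟩
  rw [pow_add, mul_assoc, ← mul_assoc s, hs'', ← mul_assoc, ← mul_assoc, mul_assoc (x ^ m * x ^ n)]

lemma Pm.pow (x : R) (hxnorm : ∀ r : R, ∃ r' : R, r * x = x * r')
    {e : ℕ} {y : R} (h : Pm x e y) (n : ℕ) : Pm x (e * n) (y ^ n) := by
  induction n with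
  | zero => exact ⟨y ^ 0, by simp⟩
  | succ k ih =>
    have h2 := Pm.mul x hxnorm ih h
    rw [← pow_succ] at h2
    have h3 : e * (k + 1) = e * k + e := by ring
    rw [h3]
    exact h2

lemma unit_pow (x : R) (hxnorm : ∀ r : R, ∃ r' : R, r * x = x * r')
    {m : ℕ} (hm : 1 ≤ m) (v : Rˣ) (z : R) (hv : (v : R) = 1 + z) (hz : Pm x m z) (n : ℕ) :
    ∃ s, ((v ^ n : Rˣ) : R) = 1 + (n : R) * z + x ^ (m + 1) * s := by
  induction n with
  | zero => exact ⟨0, by simp⟩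
  | succ n ih =>
    obtain ⟨s, hs⟩ := ih
    have hz2 : Pm x (m + 1) ((n : R) * (z * z)) :=
      Pm.mulL x hxnorm _ ((Pm.mul x hxnorm hz hz).mono (by omega))
    obtain ⟨w, hw⟩ := hz2
    refine ⟨s + s * z + w, ?_⟩
    have hval : ((v ^ (n + 1) : Rˣ) : R) = ((v ^ n : Rˣ) : R) * (v : R) := by
      rw [pow_succ]; rfl
    have expand : (1 + (n : R) * z + x ^ (m + 1) * s) * (1 + z)
        = 1 + ((n : R) + 1) * z + (x ^ (m + 1) * (s + s * z) + (n : R) * (z * z)) := by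
      noncomm_ring
    rw [hval, hs, hv, expand, hw, ← mul_add]
    push_cast
    noncomm_ring

lemma unit_inv (x : R) (hxnorm : ∀ r : R, ∃ r' : R, r * x = x * r')
    {m : ℕ} (hm : 1 ≤ m) (v : Rˣ) (z : R) (hv : (v : R) = 1 + z) (hz : Pm x m z) :
    ∃ s, ((v⁻¹ : Rˣ) : R) = 1 - z + x ^ (m + 1) * s := by
  set w : R := ((v⁻¹ : Rˣ) : R) with hwdef
  have h1 : (v : R) * w = 1 := by exact_mod_cast v.mul_inv
  rw [hv, add_mul, one_mul] at h1
  have h2 : w = 1 - z * w := by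
    rw [eq_sub_iff_add_eq]; exact h1
  have h3 : w = 1 - z + z * (z * w) := by
    calc w = 1 - z * w := h2
    _ = 1 - z * (1 - z * w) := by conv_rhs => rw [← h2]
    _ = 1 - z + z * (z * w) := by noncomm_ring
  have hz2 : Pm x (m + 1) (z * (z * w)) := by
    have : Pm x (m + m) (z * (z * w)) := Pm.mul x hxnorm hz (hz.mulR w)
    exact this.mono (by omega)
  obtain ⟨s, hs⟩ := hz2
  exact ⟨s, by rw [h3, hs]⟩

lemma unit_zpow (x : R) (hxnorm : ∀ r : R, ∃ r' : R, r * x = x * r')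
    {m : ℕ} (hm : 1 ≤ m) (v : Rˣ) (z : R) (hv : (v : R) = 1 + z) (hz : Pm x m z) (j : ℤ) :
    ∃ s, ((v ^ j : Rˣ) : R) = 1 + (j : R) * z + x ^ (m + 1) * s := by
  obtain ⟨n, rfl | rfl⟩ := j.eq_nat_or_neg
  · obtain ⟨s, hs⟩ := unit_pow x hxnorm hm v z hv hz n
    refine ⟨s, ?_⟩
    rw [zpow_natCast, hs]
    push_cast
    ring_nf
  · obtain ⟨s₀, hs₀⟩ := unit_inv x hxnorm hm v z hv hz
    have hv' : ((v⁻¹ : Rˣ) : R) = 1 + (-z + x ^ (m + 1) * s₀) := by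
      rw [hs₀, sub_eq_add_neg, add_assoc]
    have hx1 : Pm x (m + 1) (x ^ (m + 1) * s₀) := ⟨s₀, rfl⟩
    have hz' : Pm x m (-z + x ^ (m + 1) * s₀) := Pm.add hz.neg (hx1.mono (by omega))
    obtain ⟨t, ht⟩ := unit_pow x hxnorm hm v⁻¹ _ hv' hz' n
    have hcomm : (n : R) * (x ^ (m + 1) * s₀) = x ^ (m + 1) * ((n : R) * s₀) := by
      rw [← mul_assoc, (Nat.cast_commute n (x ^ (m + 1))).eq, mul_assoc]
    refine ⟨(n : R) * s₀ + t, ?_⟩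
    have : (v ^ (-(n : ℤ)) : Rˣ) = (v⁻¹) ^ n := by
      rw [zpow_neg, zpow_natCast, inv_pow]
    rw [this, ht]
    push_cast
    rw [mul_add, hcomm, mul_add]
    noncomm_ring

end Stmt10Aux

open Stmt10Aux in
/-- Abstract setting for the skew power series ring `K[[x,σ]]` in characteristic
`p > 0`: a ring `R` of characteristic `p` with an element `x` normalizing `R`
(`R x ⊆ x R`), and `y` of order `≥ e ≥ 1` (i.e. `y ∈ x^e R`).  Writing a nonzero
integer `j = p^λ j₁` with `p ∤ j₁`, one has
`(1+y)^j = 1 + j₁ y^{p^λ} + (terms of order > p^λ e)`. -/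
theorem stmt10 {K R : Type*} [Field K] [Ring R] (p : ℕ) (hp : p.Prime) [CharP R p]
    (σ : K ≃+* K) (f : K →+* R) (hf : Function.Injective f)
    (x : R) (hskew : ∀ b : K, x * f b = f (σ b) * x) (hxnorm : ∀ r : R, ∃ r' : R, r * x = x * r')
    (e : ℕ) (he : 1 ≤ e) (y : R) (hy : ∃ s₀ : R, y = x ^ e * s₀)
    (u : Rˣ) (hu : (u : R) = 1 + y)
    (j : ℤ) (hj : j ≠ 0) (lam : ℕ) (j₁ : ℤ)
    (hfact : j = (p : ℤ) ^ lam * j₁) (hcop : ¬ (p : ℤ) ∣ j₁) :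
    ∃ s : R, ((u ^ j : Rˣ) : R) = 1 + (j₁ : R) * y ^ (p ^ lam) + x ^ (e * p ^ lam + 1) * s := by
  haveI : Fact p.Prime := ⟨hp⟩
  have hm : 1 ≤ e * p ^ lam :=
    Nat.one_le_iff_ne_zero.mpr (Nat.mul_ne_zero (by omega) (pow_ne_zero _ hp.pos.ne'))
  have hyPm : Pm x e y := hy
  have hypow : Pm x (e * p ^ lam) (y ^ p ^ lam) := hyPm.pow x hxnorm _
  -- (1+y)^{p^λ} = 1 + y^{p^λ} in characteristic p
  have hchar : ((u ^ p ^ lam : Rˣ) : R) = 1 + y ^ p ^ lam := by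
    rw [Units.val_pow_eq_pow_val, hu, add_pow_char_pow_of_commute p lam (Commute.one_left y), one_pow]
  have hsplit : (u ^ j : Rˣ) = (u ^ p ^ lam) ^ j₁ := by
    rw [hfact, zpow_mul]
    congr 1
  obtain ⟨s, hs⟩ := unit_zpow x hxnorm hm (u ^ p ^ lam) (y ^ p ^ lam) hchar hypow j₁
  exact ⟨s, by rw [hsplit, hs]⟩
end

section
/- Let D be a division ring and a, b ∈ D noncommuting elements such that c = b⁻¹ a b commutes with a. Let K be a commutative subring of D containing a and c, and let M = K + bK be the right K-submodule of D generated by {1, b}. Then M is a free right K-module with basis {1, b}. -/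
/-- In a division ring `D`, if `a, b` do not commute, `c = b⁻¹ a b` commutes with `a`,
and `K` is a commutative subring containing `a` and `c`, then `M = K + bK` is a free
right `K`-module on the basis `{1, b}`: a relation `s + b t = 0` with `s, t ∈ K`
forces `s = t = 0`. -/
theorem stmt13 {D : Type*} [DivisionRing D] (a b : D)
    (hab : a * b ≠ b * a) (c : D) (hc : c = b⁻¹ * a * b) (hac : a * c = c * a)
    (K : Subring D) (hK : ∀ x ∈ K, ∀ y ∈ K, x * y = y * x)
    (haK : a ∈ K) (hcK : c ∈ K) :
    ∀ s t : D, s ∈ K → t ∈ K → 1 * s + b * t = 0 → s = 0 ∧ t = 0 := by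
  intro s t hs ht h
  have hb : b ≠ 0 := by
    intro hb0
    apply hab
    rw [hb0, mul_zero, zero_mul]
  have habc : a * b = b * c := by
    rw [hc, ← mul_assoc, ← mul_assoc, mul_inv_cancel₀ hb, one_mul]
  have hbt : b * t = -s := by
    rw [one_mul] at h
    linear_combination (norm := noncomm_ring) h
  have key : b * (t * c) = -(a * s) := by
    calc b * (t * c) = b * (c * t) := by rw [hK t ht c hcK]
    _ = (b * c) * t := by rw [mul_assoc]
    _ = (a * b) * t := by rw [habc]
    _ = a * (b * t) := by rw [mul_assoc]
    _ = -(a * s) := by rw [hbt, mul_neg]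
  have key2 : b * (t * c) = -(s * c) := by
    rw [← mul_assoc, hbt, neg_mul]
  have hsc : s * c = a * s := neg_injective (key2.symm.trans key)
  have hsa : a * s = s * a := hK a haK s hs
  have hs0 : s * (c - a) = 0 := by
    rw [mul_sub, hsc, hsa, sub_self]
  have hs0' : s = 0 := by
    rcases mul_eq_zero.mp hs0 with h1 | h1
    · exact h1
    · exfalso; apply hab
      have hca : c = a := by rwa [sub_eq_zero] at h1
      rw [habc, hca]
  refine ⟨hs0', ?_⟩
  have hbt0 : b * t = 0 := by rw [hbt, hs0', neg_zero]
  rcases mul_eq_zero.mp hbt0 with h1 | h1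
  · exact absurd h1 hb
  · exact h1
end

section
/- Let D be a division ring, K a subfield of D, and a ∈ D an element with a K a⁻¹ = K such that a is algebraic over the center F of D with F ⊆ K. Then the subring L = Σ_{i∈ℕ} K aⁱ of D is contained in Σ_{i=0}^m K aⁱ for some m, L is a division subring of D, and L is a finite-dimensional left vector space over K. -/
set_option maxHeartbeats 1000000 in
set_option synthInstance.maxHeartbeats 100000 in
/-- Let `D` be a division ring with center `F`, `K` a (commutative) subfield of `D`
containing `F`, and `a ∈ D*` with `a K a⁻¹ = K` and `a` algebraic over `F`.  Then
`L = Σ_i K aⁱ` is spanned by finitely many powers of `a` (so is a finite-dimensional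
left `K`-vector space) and is a division subring of `D`. -/
theorem stmt18 {D : Type*} [DivisionRing D] (K : Subfield D)
    (hKcomm : ∀ x ∈ K, ∀ y ∈ K, x * y = y * x)
    (hFK : (Subring.center D : Set D) ⊆ (K : Set D))
    (a : D) (ha : a ≠ 0)
    (hnorm : ∀ k : D, k ∈ K ↔ a * k * a⁻¹ ∈ K)
    (halg : IsAlgebraic (Subring.center D) a)
    (L : Set D)
    (hL : L = {z : D | ∃ (m : ℕ) (c : ℕ → D), (∀ i, c i ∈ K) ∧
      z = ∑ i ∈ Finset.range (m + 1), c i * a ^ i}) :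
    (∃ m : ℕ, ∀ z ∈ L, ∃ c : ℕ → D, (∀ i, c i ∈ K) ∧
      z = ∑ i ∈ Finset.range (m + 1), c i * a ^ i) ∧
    ∃ L' : Subring D, (L' : Set D) = L ∧ ∀ z ∈ L', z ≠ 0 → z⁻¹ ∈ L' := by
  classical
  obtain ⟨p, hp0, hpa⟩ := halg
  set n := p.natDegree with hn
  have hn0 : 0 < n := by
    rcases Nat.eq_zero_or_pos n with h | h
    · exfalso
      rw [Polynomial.eq_C_of_natDegree_eq_zero h] at hpa hp0
      rw [Polynomial.aeval_C] at hpa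
      have h0 : p.coeff 0 = 0 := by
        have : ((p.coeff 0 : Subring.center D) : D) = 0 := hpa
        exact_mod_cast this
      simp [h0] at hp0
    · exact h
  have hsmul : ∀ (k : K) (x : D), k • x = ↑k * x := fun _ _ => rfl
  -- conjugation lemma
  have hconj : ∀ (i : ℕ), ∀ k ∈ K, ∃ k' ∈ K, a ^ i * k = k' * a ^ i := by
    intro i
    induction i with
    | zero => intro k hk; exact ⟨k, hk, by simp⟩
    | succ i ih =>
      intro k hk
      obtain ⟨k', hk', hkk'⟩ := ih k hk
      refine ⟨a * k' * a⁻¹, (hnorm k').mp hk', ?_⟩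
      calc a ^ (i + 1) * k = a * (a ^ i * k) := by rw [pow_succ', mul_assoc]
        _ = a * k' * a ^ i := by rw [hkk', mul_assoc]
        _ = (a * k' * a⁻¹) * a * a ^ i := by rw [inv_mul_cancel_right₀ ha]
        _ = (a * k' * a⁻¹) * a ^ (i + 1) := by rw [mul_assoc, ← pow_succ']
  set V : Submodule K D := Submodule.span K (Set.range fun i : Fin n => a ^ (i : ℕ)) with hV
  have hgen : ∀ i : Fin n, a ^ (i : ℕ) ∈ V := fun i => Submodule.subset_span ⟨i, rfl⟩
  have hKmul : ∀ k ∈ K, ∀ x ∈ V, k * x ∈ V := by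
    intro k hk x hx
    rw [← hsmul ⟨k, hk⟩ x]
    exact V.smul_mem _ hx
  -- a^n ∈ V
  have han : a ^ n ∈ V := by
    have hsum := Polynomial.aeval_eq_sum_range (R := Subring.center D) (S := D) (x := a) (p := p)
    rw [hpa, ← hn, Finset.sum_range_succ] at hsum
    set u : D := ((p.coeff n : Subring.center D) : D) with hu
    have hu0 : u ≠ 0 := by
      simp only [hu, ne_eq, ZeroMemClass.coe_eq_zero]
      exact fun h0 => hp0 (Polynomial.leadingCoeff_eq_zero.mp h0)
    have huK : u ∈ K := hFK (p.coeff n).2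
    set S : D := ∑ i ∈ Finset.range n, (p.coeff i : Subring.center D) • a ^ i with hS
    have hSV : S ∈ V := by
      refine Submodule.sum_mem V fun i hi => ?_
      have : ((p.coeff i : Subring.center D) : D) * a ^ i ∈ V :=
        hKmul _ (hFK (p.coeff i).2) _ (hgen ⟨i, Finset.mem_range.mp hi⟩)
      exact this
    have h2 : S + u * a ^ n = 0 := hsum.symm
    have h3 : a ^ n = u⁻¹ * (-S) := by
      have h4 : u * a ^ n = -S := by
        exact eq_neg_of_add_eq_zero_right h2
      rw [← h4, ← mul_assoc, inv_mul_cancel₀ hu0, one_mul]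
    rw [h3]
    exact hKmul _ (K.inv_mem huK) _ (V.neg_mem hSV)
  -- closure under right multiplication by a
  have hmul_a : ∀ x ∈ V, x * a ∈ V := by
    let W : Submodule K D :=
      { carrier := setOf fun x : D => x * a ∈ V
        add_mem' := fun {u v} hu hv => by
          show (u + v) * a ∈ V
          rw [add_mul]; exact V.add_mem hu hv
        zero_mem' := by
          show (0:D) * a ∈ V; rw [zero_mul]; exact V.zero_mem
        smul_mem' := fun k x hx => by
          show (k • x) * a ∈ V
          rw [hsmul, mul_assoc, ← hsmul]
          exact V.smul_mem _ hx }
    intro x hx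
    have hle : V ≤ W := by
      rw [hV]
      apply Submodule.span_le.mpr
      rintro _ ⟨i, rfl⟩
      show a ^ (i : ℕ) * a ∈ V
      rw [← pow_succ]
      rcases lt_or_eq_of_le (Nat.succ_le_of_lt i.2) with h | h
      · exact hgen ⟨(i : ℕ) + 1, h⟩
      · rw [show (i : ℕ) + 1 = n from h]; exact han
    exact hle hx
  have hpow : ∀ j : ℕ, a ^ j ∈ V := by
    intro j
    induction j with
    | zero => simpa using hgen ⟨0, hn0⟩
    | succ j ih => rw [pow_succ]; exact hmul_a _ ih
  have hpowmul : ∀ (i : ℕ), ∀ y ∈ V, a ^ i * y ∈ V := by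
    intro i
    let W : Submodule K D :=
      { carrier := setOf fun y : D => a ^ i * y ∈ V
        add_mem' := fun {u v} hu hv => by
          show a ^ i * (u + v) ∈ V
          rw [mul_add]; exact V.add_mem hu hv
        zero_mem' := by
          show a ^ i * (0:D) ∈ V; rw [mul_zero]; exact V.zero_mem
        smul_mem' := fun k x hx => by
          show a ^ i * (k • x) ∈ V
          obtain ⟨k', hk', hkk'⟩ := hconj i (k : D) k.2
          rw [hsmul, ← mul_assoc, hkk', mul_assoc]
          exact hKmul _ hk' _ hx }
    intro y hy
    have hle : V ≤ W := by
      rw [hV]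
      apply Submodule.span_le.mpr
      rintro _ ⟨j, rfl⟩
      show a ^ i * a ^ (j : ℕ) ∈ V
      rw [← pow_add]
      exact hpow _
    exact hle hy
  have hmulmem : ∀ x ∈ V, ∀ y ∈ V, x * y ∈ V := by
    intro x hx y hy
    revert x
    let W : Submodule K D :=
      { carrier := setOf fun x : D => x * y ∈ V
        add_mem' := fun {u v} hu hv => by
          show (u + v) * y ∈ V
          rw [add_mul]; exact V.add_mem hu hv
        zero_mem' := by
          show (0:D) * y ∈ V; rw [zero_mul]; exact V.zero_mem
        smul_mem' := fun k x hx => by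
          show (k • x) * y ∈ V
          rw [hsmul, mul_assoc, ← hsmul]
          exact V.smul_mem _ hx }
    intro x hx
    have hle : V ≤ W := by
      rw [hV]
      apply Submodule.span_le.mpr
      rintro _ ⟨i, rfl⟩
      exact hpowmul i y hy
    exact hle hx
  have hone : (1 : D) ∈ V := by simpa using hpow 0
  -- representation with bounded degree
  have hrep : ∀ z ∈ V, ∃ c : ℕ → D, (∀ i, c i ∈ K) ∧
      z = ∑ i ∈ Finset.range ((n - 1) + 1), c i * a ^ i := by
    intro z hz
    rw [hV] at hz
    obtain ⟨c, hc⟩ := (Submodule.mem_span_range_iff_exists_fun K).mp hz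
    refine ⟨fun i => if h : i < n then ((c ⟨i, h⟩ : K) : D) else 0, fun i => ?_, ?_⟩
    · by_cases h : i < n
      · simp only [dif_pos h]; exact (c ⟨i, h⟩).2
      · simp only [dif_neg h]; exact K.zero_mem
    · rw [Nat.sub_add_cancel hn0]
      rw [← hc, ← Fin.sum_univ_eq_sum_range
        (fun i => (if h : i < n then ((c ⟨i, h⟩ : K) : D) else 0) * a ^ i) n]
      refine Finset.sum_congr rfl fun i _ => ?_
      rw [hsmul]
      congr 1
      rw [dif_pos i.2]
  have hLV : L ⊆ (V : Set D) := by
    intro z hz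
    rw [hL] at hz
    obtain ⟨m, c, hc, rfl⟩ := hz
    exact Submodule.sum_mem V fun i _ => hKmul _ (hc i) _ (hpow i)
  have hVL : (V : Set D) ⊆ L := by
    intro z hz
    obtain ⟨c, hcK, hzc⟩ := hrep z hz
    rw [hL]
    exact ⟨n - 1, c, hcK, hzc⟩
  refine ⟨⟨n - 1, fun z hz => hrep z (hLV hz)⟩, ?_⟩
  refine ⟨{ carrier := V
            one_mem' := hone
            mul_mem' := fun {x y} hx hy => hmulmem x hx y hy
            add_mem' := fun {x y} hx hy => V.add_mem hx hy
            zero_mem' := V.zero_mem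
            neg_mem' := fun {x} hx => V.neg_mem hx }, ?_, ?_⟩
  · apply Set.Subset.antisymm
    · exact fun z hz => hVL hz
    · exact fun z hz => hLV hz
  · intro z hz hz0
    have hzV : z ∈ V := hz
    haveI : FiniteDimensional K V := by
      rw [hV]
      exact FiniteDimensional.span_of_finite K (Set.finite_range _)
    set f : V →ₗ[K] V :=
      { toFun := fun x => ⟨x.1 * z, hmulmem _ x.2 _ hzV⟩
        map_add' := fun x y => Subtype.ext (add_mul _ _ _)
        map_smul' := fun k x => Subtype.ext (by
          simp only [SetLike.val_smul, RingHom.id_apply]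
          rw [hsmul, hsmul, mul_assoc]) } with hf
    have hinj : Function.Injective f := by
      intro x y hxy
      exact Subtype.ext (mul_right_cancel₀ hz0 (congrArg Subtype.val hxy))
    obtain ⟨x, hx⟩ := (LinearMap.injective_iff_surjective).mp hinj ⟨1, hone⟩
    have hx1 : x.1 * z = 1 := congrArg Subtype.val hx
    have hxz : x.1 = z⁻¹ := eq_inv_of_mul_eq_one_left hx1
    show z⁻¹ ∈ V
    rw [← hxz]
    exact x.2
end

section
/- Let K be a field, σ an automorphism of K, and K[t,σ] the skew polynomial ring. Let D be a division ring containing K as a subfield and a ∈ D* with a b a⁻¹ = σ(b) for all b ∈ K. Consider the ring homomorphism Φ : K[t,σ] → D determined by Φ|_K = id and Φ(t) = a. If ker Φ ≠ 0, then ker Φ is generated by a single polynomial f(t) and the image K[a] = Φ(K[t,σ]) is a division subring of D which is finite-dimensional as a left K-vector space. -/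
/-- Abstract setting: `P` is the skew polynomial ring `K[t,σ]` (a ring containing `K`
via `ι`, with `t` satisfying the skew relation and the powers of `t` forming a left
`K`-basis), `D` is a division ring containing `K` via `f = Φ ∘ ι`, `a = Φ t`
satisfies `a b a⁻¹ = σ(b)` on `K`, and `Φ : P →+* D` extends `f` with `Φ t = a`.
If `ker Φ ≠ 0`, then `ker Φ` is generated (as a left ideal) by a single polynomial,
and the image `K[a] = Φ(P)` is a division subring of `D` which is finite-dimensional
as a left `K`-vector space. -/
theorem stmt19 {K P D : Type*} [Field K] [Ring P] [DivisionRing D] (σ : K ≃+* K)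
    (ι : K →+* P) (hι : Function.Injective ι) (t : P)
    (hskewP : ∀ b : K, t * ι b = ι (σ b) * t)
    (hspan : ∀ z : P, ∃ (m : ℕ) (c : ℕ → K),
      z = ∑ i ∈ Finset.range (m + 1), ι (c i) * t ^ i)
    (hind : ∀ (m : ℕ) (c : ℕ → K),
      (∑ i ∈ Finset.range m, ι (c i) * t ^ i) = 0 → ∀ i < m, c i = 0)
    (f : K →+* D) (hf : Function.Injective f)
    (a : D) (ha : a ≠ 0) (hconj : ∀ b : K, a * f b * a⁻¹ = f (σ b))
    (Φ : P →+* D) (hΦι : ∀ b : K, Φ (ι b) = f b) (hΦt : Φ t = a)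
    (hker : RingHom.ker Φ ≠ ⊥) :
    (∃ g : P, ∀ z : P, Φ z = 0 ↔ ∃ q : P, z = q * g) ∧
    (∀ z ∈ Φ.range, z ≠ 0 → z⁻¹ ∈ Φ.range) ∧
    ∃ m : ℕ, ∀ z ∈ Φ.range, ∃ c : ℕ → K,
      z = ∑ i ∈ Finset.range (m + 1), f (c i) * a ^ i := by
  classical
  -- skew powers
  have tpow : ∀ (k : ℕ) (b : K), t ^ k * ι b = ι ((σ ^ k) b) * t ^ k := by
    intro k
    induction k with
    | zero => intro b; simp only [pow_zero, one_mul, mul_one]; rfl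
    | succ k ih =>
      intro b
      have h1 : (σ ^ (k + 1)) b = (σ ^ k) (σ b) := by rw [pow_succ]; rfl
      rw [pow_succ, mul_assoc, hskewP, ← mul_assoc, ih, h1, mul_assoc]
  -- monotonicity of degree bound representation
  have mono : ∀ (z : P) (m m' : ℕ), m ≤ m' →
      (∃ c : ℕ → K, z = ∑ i ∈ Finset.range m, ι (c i) * t ^ i) →
      ∃ c : ℕ → K, z = ∑ i ∈ Finset.range m', ι (c i) * t ^ i := by
    rintro z m m' h ⟨c, rfl⟩
    refine ⟨fun i => if i < m then c i else 0, ?_⟩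
    rw [← Finset.sum_subset (Finset.range_subset_range.mpr h)
      (fun i _ hi => by simp [Nat.le_of_not_lt, (by simpa using hi : ¬ i < m)])]
    exact Finset.sum_congr rfl fun i hi => by simp [Finset.mem_range.mp hi]
  -- existence of a nonzero kernel element with a degree bound
  have hex : ∃ m : ℕ, ∃ z : P, Φ z = 0 ∧ z ≠ 0 ∧
      ∃ c : ℕ → K, z = ∑ i ∈ Finset.range m, ι (c i) * t ^ i := by
    obtain ⟨z, hz, hz0⟩ := Submodule.exists_mem_ne_zero_of_ne_bot hker
    obtain ⟨m, c, hc⟩ := hspan z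
    exact ⟨m + 1, z, RingHom.mem_ker.mp hz, hz0, c, hc⟩
  obtain ⟨g, hg0, hgne, cg, hcg⟩ := Nat.find_spec hex
  set N := Nat.find hex with hNdef
  have hmin : ∀ m, m < N → ¬ ∃ z : P, Φ z = 0 ∧ z ≠ 0 ∧
      ∃ c : ℕ → K, z = ∑ i ∈ Finset.range m, ι (c i) * t ^ i :=
    fun m hm => Nat.find_min hex hm
  have hN0 : N ≠ 0 := by
    intro h
    apply hgne
    rw [hcg, h, Finset.range_zero, Finset.sum_empty]
  obtain ⟨n, hNn⟩ : ∃ n, N = n + 1 := ⟨N - 1, by omega⟩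
  -- leading coefficient of g is nonzero
  have hlead : cg n ≠ 0 := by
    intro h
    refine hmin n (by omega) ⟨g, hg0, hgne, cg, ?_⟩
    rw [hcg, hNn, Finset.sum_range_succ, h, map_zero, zero_mul, add_zero]
  -- key multiplication formula
  have B2 : ∀ (e : K) (k : ℕ), ι e * t ^ k * g =
      ∑ j ∈ Finset.range (N + k),
        ι (if k ≤ j then e * (σ ^ k) (cg (j - k)) else 0) * t ^ j := by
    intro e k
    have h1 : ι e * t ^ k * g = ∑ i ∈ Finset.range N, ι (e * (σ ^ k) (cg i)) * t ^ (k + i) := by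
      rw [hcg, Finset.mul_sum]
      refine Finset.sum_congr rfl fun i _ => ?_
      rw [← mul_assoc, mul_assoc (ι e), tpow, ← mul_assoc, ← map_mul, mul_assoc, ← pow_add]
    rw [h1, add_comm N k, Finset.sum_range_add]
    have h0 : ∑ j ∈ Finset.range k,
        ι (if k ≤ j then e * (σ ^ k) (cg (j - k)) else 0) * t ^ j = 0 := by
      refine Finset.sum_eq_zero fun j hj => ?_
      have hj' : ¬ k ≤ j := by have := Finset.mem_range.mp hj; omega
      simp [hj']
    rw [h0, zero_add]
    refine Finset.sum_congr rfl fun i _ => ?_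
    simp [Nat.le_add_right, Nat.add_sub_cancel_left]
  -- division with remainder by g
  have hdiv : ∀ (m : ℕ) (z : P),
      (∃ c : ℕ → K, z = ∑ i ∈ Finset.range m, ι (c i) * t ^ i) →
      ∃ q r : P, z = q * g + r ∧
        ∃ c : ℕ → K, r = ∑ i ∈ Finset.range n, ι (c i) * t ^ i := by
    intro m
    induction m using Nat.strong_induction_on with
    | _ m IH =>
      intro z hz
      by_cases hm : m ≤ n
      · exact ⟨0, z, by rw [zero_mul, zero_add], mono z m n hm hz⟩
      · obtain ⟨c, hc⟩ := hz
        obtain ⟨s, rfl⟩ : ∃ s, m = s + 1 := ⟨m - 1, by omega⟩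
        have hs : n ≤ s := by omega
        set k := s - n with hk
        have hlead' : (σ ^ k) (cg n) ≠ 0 := fun h =>
          hlead ((σ ^ k).injective (by rw [h, map_zero]))
        set e := c s * ((σ ^ k) (cg n))⁻¹ with he
        set b : ℕ → K := fun j => if k ≤ j then e * (σ ^ k) (cg (j - k)) else 0 with hbdef
        have hb : ι e * t ^ k * g = ∑ j ∈ Finset.range (s + 1), ι (b j) * t ^ j := by
          rw [show s + 1 = N + k by omega]
          exact B2 e k
        have htop : b s = c s := by
          show (if k ≤ s then e * (σ ^ k) (cg (s - k)) else 0) = c s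
          rw [if_pos (by omega), show s - k = n by omega, he, mul_assoc,
            inv_mul_cancel₀ hlead', mul_one]
        have hz' : z - ι e * t ^ k * g = ∑ j ∈ Finset.range s, ι (c j - b j) * t ^ j := by
          rw [hc, hb, ← Finset.sum_sub_distrib]
          have hcongr : ∀ j ∈ Finset.range (s + 1),
              ι (c j) * t ^ j - ι (b j) * t ^ j = ι (c j - b j) * t ^ j := by
            intro j _; rw [map_sub, sub_mul]
          rw [Finset.sum_congr rfl hcongr, Finset.sum_range_succ, htop, sub_self,
            map_zero, zero_mul, add_zero]
        obtain ⟨q', r, hqr, hr⟩ := IH s (by omega) (z - ι e * t ^ k * g) ⟨_, hz'⟩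
        refine ⟨q' + ι e * t ^ k, r, ?_, hr⟩
        rw [sub_eq_iff_eq_add] at hqr
        rw [hqr, add_mul, add_right_comm]
  -- kernel elements are right multiples of g
  have hkerg : ∀ z : P, Φ z = 0 → ∃ q, z = q * g := by
    intro z hz
    obtain ⟨m, c, hc⟩ := hspan z
    obtain ⟨q, r, hqr, cr, hr⟩ := hdiv (m + 1) z ⟨c, hc⟩
    have hΦr : Φ r = 0 := by
      have h2 : Φ z = Φ q * Φ g + Φ r := by rw [hqr, map_add, map_mul]
      rw [hz, hg0, mul_zero, zero_add] at h2
      exact h2.symm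
    have hr0 : r = 0 := by
      by_contra h
      exact hmin n (by omega) ⟨r, hΦr, h, cr, hr⟩
    exact ⟨q, by rw [hqr, hr0, add_zero]⟩
  -- uniform representation of the image
  have hrep : ∀ z : P, ∃ c : ℕ → K,
      Φ z = ∑ i ∈ Finset.range (n + 1), f (c i) * a ^ i := by
    intro z
    obtain ⟨m, c, hc⟩ := hspan z
    obtain ⟨q, r, hqr, cr, hr⟩ := hdiv (m + 1) z ⟨c, hc⟩
    obtain ⟨cr', hr'⟩ := mono r n (n + 1) (Nat.le_succ n) ⟨cr, hr⟩
    refine ⟨cr', ?_⟩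
    rw [hqr, map_add, map_mul, hg0, mul_zero, zero_add, hr', map_sum]
    exact Finset.sum_congr rfl fun i _ => by rw [map_mul, map_pow, hΦι, hΦt]
  refine ⟨⟨g, fun z => ⟨hkerg z, ?_⟩⟩, ?_, ⟨n, fun z hz => ?_⟩⟩
  · rintro ⟨q, rfl⟩
    rw [map_mul, hg0, mul_zero]
  · -- image is closed under inverses
    letI : Module K D := Module.compHom D f
    have hsmul : ∀ (c : K) (x : D), c • x = f c * x := fun c x => rfl
    set T : Submodule K D :=
      { carrier := Φ.range
        add_mem' := fun hx hy => add_mem hx hy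
        zero_mem' := zero_mem _
        smul_mem' := fun c x hx => by
          rw [hsmul]
          exact mul_mem ⟨ι c, hΦι c⟩ hx } with hTdef
    have memT : ∀ x : D, x ∈ T ↔ x ∈ Φ.range := fun x => Iff.rfl
    have hTspan : T = Submodule.span K (Set.range fun i : Fin (n + 1) => a ^ (i : ℕ)) := by
      apply le_antisymm
      · intro x hx
        obtain ⟨p, rfl⟩ := (memT x).mp hx
        obtain ⟨c, hc⟩ := hrep p
        rw [hc]
        refine Submodule.sum_mem _ fun i hi => ?_
        rw [← hsmul]
        exact Submodule.smul_mem _ _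
          (Submodule.subset_span ⟨⟨i, Finset.mem_range.mp hi⟩, rfl⟩)
      · rw [Submodule.span_le]
        rintro x ⟨i, rfl⟩
        exact (memT _).mpr ⟨t ^ (i : ℕ), by rw [map_pow, hΦt]⟩
    haveI : FiniteDimensional K T :=
      hTspan ▸ FiniteDimensional.span_of_finite K (Set.finite_range _)
    intro z hz hz0
    set L : T →ₗ[K] T :=
      { toFun := fun x => ⟨(x : D) * z, (memT _).mpr (mul_mem ((memT _).mp x.2) hz)⟩
        map_add' := fun x y => Subtype.ext (add_mul _ _ _)
        map_smul' := fun c x => Subtype.ext (by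
          show ((c • x : T) : D) * z = f c * ((x : D) * z)
          rw [show ((c • x : T) : D) = f c * (x : D) from rfl, mul_assoc]) } with hLdef
    have hLinj : Function.Injective L := by
      intro x y hxy
      apply Subtype.ext
      have h3 : (x : D) * z = (y : D) * z := congrArg Subtype.val hxy
      exact mul_right_cancel₀ hz0 h3
    obtain ⟨y, hy⟩ := (LinearMap.injective_iff_surjective.mp hLinj)
      ⟨1, (memT _).mpr (one_mem _)⟩
    have hy1 : (y : D) * z = 1 := congrArg Subtype.val hy
    rw [inv_eq_of_mul_eq_one_left hy1]
    exact (memT _).mp y.2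
  · -- finite dimensionality
    obtain ⟨p, rfl⟩ := hz
    exact hrep p
end
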